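/- The 2-kernel of the Rudin-Shapiro sequence, i.e., the set of sequences n ↦ r(2^l n + m) for l ≥ 0 and 0 ≤ m < 2^l, equals the four-element set { r(n), -r(n), r(2n+1), -r(2n+1) }. In particular the 2-kernel is symmetric: it is closed under negation. -/

import Mathlib

def s2 (n : ℕ) : ℕ := (Nat.digits 2 n).sum

def t (n : ℕ) : ℤ := (-1) ^ (s2 n)

def f11 (n : ℕ) : ℕ :=
  ((Finset.range n).filter (fun i => n.testBit i ∧ n.testBit (i + 1))).card

def r (n : ℕ) : ℤ := (-1) ^ (f11 n)

lemma f11_stable (n K : ℕ) (h : n ≤ K) :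
    f11 n = ((Finset.range K).filter (fun i => n.testBit i ∧ n.testBit (i + 1))).card := by
  unfold f11
  congr 1
  ext i
  simp only [Finset.mem_filter, Finset.mem_range]
  constructor
  · rintro ⟨hi, h1, h2⟩
    exact ⟨lt_of_lt_of_le hi h, h1, h2⟩
  · rintro ⟨hi, h1, h2⟩
    refine ⟨?_, h1, h2⟩
    by_contra hni
    push_neg at hni
    have hlt : n < 2 ^ i := lt_of_le_of_lt hni (Nat.lt_two_pow_self (n := i))
    rw [Nat.testBit_eq_false_of_lt hlt] at h1
    exact Bool.false_ne_true h1

lemma f11_bit (n b : ℕ) (hb : b < 2) :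
    f11 (2 * n + b) = f11 n + (if b = 1 ∧ n % 2 = 1 then 1 else 0) := by
  have hdiv : (2 * n + b) / 2 = n := by omega
  have hKs : 2 * n + b ≤ 2 * n + 2 := by omega
  rw [f11_stable (2 * n + b) (2 * n + 2) hKs, Finset.card_filter]
  have : (2 * n + 2 : ℕ) = (2 * n + 1) + 1 := by ring
  rw [this, Finset.sum_range_succ']
  have hshift : ∀ i : ℕ, (2 * n + b).testBit (i + 1) = n.testBit i := by
    intro i
    rw [Nat.testBit_succ, hdiv]
  have h1 : (∑ i ∈ Finset.range (2 * n + 1),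
      if (2 * n + b).testBit (i + 1) ∧ (2 * n + b).testBit (i + 1 + 1) then 1 else 0) = f11 n := by
    rw [f11_stable n (2 * n + 1) (by omega), Finset.card_filter]
    apply Finset.sum_congr rfl
    intro i _
    rw [hshift i, hshift (i + 1)]
  rw [h1]
  congr 1
  have hb0 : (2 * n + b).testBit 0 = decide (b = 1) := by
    rw [Nat.testBit_zero]
    congr 1
    simp only [eq_iff_iff]
    omega
  have hb1 : (2 * n + b).testBit 1 = n.testBit 0 := hshift 0
  rw [hb0, hb1, Nat.testBit_zero]
  by_cases h : b = 1 ∧ n % 2 = 1 <;> simp [h]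

lemma r_even (n : ℕ) : r (2 * n) = r n := by
  unfold r
  rw [show (2 * n : ℕ) = 2 * n + 0 by ring, f11_bit n 0 (by omega)]
  simp

lemma r_odd (n : ℕ) : r (2 * n + 1) = r n * (if n % 2 = 1 then -1 else 1) := by
  unfold r
  rw [f11_bit n 1 (by omega)]
  by_cases h : n % 2 = 1 <;> simp [h, pow_add]

lemma r_4n1 (n : ℕ) : r (4 * n + 1) = r n := by
  rw [show (4 * n + 1 : ℕ) = 2 * (2 * n) + 1 by ring, r_odd, r_even]
  simp [Nat.mul_mod_right]

lemma r_4n3 (n : ℕ) : r (4 * n + 3) = -r (2 * n + 1) := by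
  rw [show (4 * n + 3 : ℕ) = 2 * (2 * n + 1) + 1 by ring, r_odd]
  have : (2 * n + 1) % 2 = 1 := by omega
  simp [this]

theorem rudin_shapiro_kernel :
    {f : ℕ → ℤ | ∃ l m : ℕ, m < 2 ^ l ∧ f = fun n => r (2 ^ l * n + m)} =
      {fun n => r n, fun n => -r n, fun n => r (2 * n + 1), fun n => -r (2 * n + 1)} := by
  have closure : ∀ F : ℕ → ℤ,
      F ∈ ({fun n => r n, fun n => -r n, fun n => r (2 * n + 1), fun n => -r (2 * n + 1)} :
        Set (ℕ → ℤ)) → ∀ b < 2,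
      (fun k => F (2 * k + b)) ∈ ({fun n => r n, fun n => -r n, fun n => r (2 * n + 1),
        fun n => -r (2 * n + 1)} : Set (ℕ → ℤ)) := by
    rintro F (rfl | rfl | rfl | rfl) b hb <;> interval_cases b <;>
      simp only [Set.mem_insert_iff, Set.mem_singleton_iff, Nat.add_zero]
    · left; funext k; simp [r_even]
    · right; right; left; trivial
    · right; left; funext k; simp [r_even]
    · right; right; right; trivial
    · left; funext k
      rw [show 2 * (2 * k) + 1 = 4 * k + 1 by ring, r_4n1]
    · right; right; right; funext k
      rw [show 2 * (2 * k + 1) + 1 = 4 * k + 3 by ring, r_4n3]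
    · right; left; funext k
      rw [show 2 * (2 * k) + 1 = 4 * k + 1 by ring, r_4n1]
    · right; right; left; funext k
      rw [show 2 * (2 * k + 1) + 1 = 4 * k + 3 by ring, r_4n3, neg_neg]
  have key : ∀ l : ℕ, ∀ m < 2 ^ l, ∀ F : ℕ → ℤ,
      F ∈ ({fun n => r n, fun n => -r n, fun n => r (2 * n + 1), fun n => -r (2 * n + 1)} :
        Set (ℕ → ℤ)) →
      (fun n => F (2 ^ l * n + m)) ∈ ({fun n => r n, fun n => -r n, fun n => r (2 * n + 1),
        fun n => -r (2 * n + 1)} : Set (ℕ → ℤ)) := by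
    intro l
    induction l with
    | zero =>
      intro m hm F hF
      interval_cases m
      simpa using hF
    | succ l ih =>
      intro m hm F hF
      have hq : m / 2 < 2 ^ l := by
        rw [pow_succ] at hm; omega
      have heq : (fun n => F (2 ^ (l + 1) * n + m)) =
          fun n => (fun k => F (2 * k + m % 2)) (2 ^ l * n + m / 2) := by
        funext n
        congr 1
        have h2 : 2 * (m / 2) + m % 2 = m := by omega
        conv_lhs => rw [← h2]
        rw [pow_succ]; ring
      rw [heq]
      exact ih (m / 2) hq _ (closure F hF (m % 2) (Nat.mod_lt _ (by omega)))
  ext f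
  simp only [Set.mem_setOf_eq]
  constructor
  · rintro ⟨l, m, hm, rfl⟩
    exact key l m hm _ (Or.inl rfl)
  · rintro (rfl | rfl | rfl | rfl)
    · exact ⟨0, 0, by norm_num, by funext n; simp⟩
    · refine ⟨3, 3, by norm_num, ?_⟩
      funext n
      rw [show (2:ℕ) ^ 3 * n + 3 = 4 * (2 * n) + 3 by ring, r_4n3,
        show 2 * (2 * n) + 1 = 4 * n + 1 by ring, r_4n1]
    · exact ⟨1, 1, by norm_num, by funext n; norm_num⟩
    · refine ⟨2, 3, by norm_num, ?_⟩
      funext n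
      rw [show (2:ℕ) ^ 2 * n + 3 = 4 * n + 3 by ring, r_4n3]
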